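/- Let k be an integer with 3 ≤ k ≤ 6 and let I_k denote the open interval ((k−2)/(k−1), 2/√(k−1)); define m(α,k) := min{ (4−(k−1)α²)/(k−α(k−1)), 4 − (4(k−2))/((k−1)α) } for α ∈ I_k. Then there exists α_*(k) ∈ I_k such that m(α,k) = 4 − (4(k−2))/((k−1)α) for all α ∈ ((k−2)/(k−1), α_*(k)], and m(α,k) = (4−(k−1)α²)/(k−α(k−1)) for all α ∈ [α_*(k), 2/√(k−1)); moreover the function α ↦ m(α,k) is monotone increasing on ((k−2)/(k−1), α_*(k)] and monotone decreasing on [α_*(k), 2/√(k−1)). -/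

import Mathlib

/-- The function `m(α,k) = min{ (4−(k−1)α²)/(k−α(k−1)), 4 − (4(k−2))/((k−1)α) }`. -/
noncomputable def mFun (k : ℕ) (α : ℝ) : ℝ :=
  min ((4 - ((k : ℝ) - 1) * α ^ 2) / ((k : ℝ) - α * ((k : ℝ) - 1)))
    (4 - (4 * ((k : ℝ) - 2)) / (((k : ℝ) - 1) * α))

/-- Auxiliary cubic whose sign governs which branch of the min is active. -/
def Naux (r α : ℝ) : ℝ :=
  -(r-1)^2*α^3 + 4*(r-1)^2*α^2 + (4-8*(r-1))*(r-1)*α + 4*((r-1)^2-1)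

lemma Naux_continuous (r : ℝ) : Continuous (Naux r) := by
  unfold Naux; fun_prop

set_option maxHeartbeats 1000000 in
theorem statement2 (k : ℕ) (hk3 : 3 ≤ k) (hk6 : k ≤ 6) :
    ∃ αs : ℝ,
      αs ∈ Set.Ioo (((k : ℝ) - 2) / ((k : ℝ) - 1)) (2 / Real.sqrt ((k : ℝ) - 1)) ∧
      (∀ α ∈ Set.Ioc (((k : ℝ) - 2) / ((k : ℝ) - 1)) αs,
        mFun k α = 4 - (4 * ((k : ℝ) - 2)) / (((k : ℝ) - 1) * α)) ∧
      (∀ α ∈ Set.Ico αs (2 / Real.sqrt ((k : ℝ) - 1)),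
        mFun k α = (4 - ((k : ℝ) - 1) * α ^ 2) / ((k : ℝ) - α * ((k : ℝ) - 1))) ∧
      MonotoneOn (mFun k) (Set.Ioc (((k : ℝ) - 2) / ((k : ℝ) - 1)) αs) ∧
      AntitoneOn (mFun k) (Set.Ico αs (2 / Real.sqrt ((k : ℝ) - 1))) := by
  have hr3 : (3:ℝ) ≤ (k:ℝ) := by exact_mod_cast hk3
  have hr6 : (k:ℝ) ≤ 6 := by exact_mod_cast hk6
  set r : ℝ := (k:ℝ) with hrdef
  set s : ℝ := Real.sqrt (r - 1) with hsdef
  have hK0 : (0:ℝ) < r - 1 := by linarith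
  have hs2 : s ^ 2 = r - 1 := Real.sq_sqrt (by linarith)
  have hs0 : 0 < s := Real.sqrt_pos.2 hK0
  have hs1 : 1 < s := by nlinarith
  have hs5 : s ^ 2 ≤ 5 := by rw [hs2]; linarith
  -- the mFun written in terms of r
  have hmf : ∀ α : ℝ, mFun k α =
      min ((4 - (r - 1) * α ^ 2) / (r - α * (r - 1)))
        (4 - (4 * (r - 2)) / ((r - 1) * α)) := by
    intro α; rw [mFun, ← hrdef]
  -- strict antitonicity of the cubic
  have hanti : ∀ x y : ℝ, x < y → Naux r y < Naux r x := by
    intro x y hxy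
    have hQ : -(r-1)^2*(x^2+x*y+y^2) + 4*(r-1)^2*(x+y) + (4-8*(r-1))*(r-1) < 0 := by
      nlinarith [sq_nonneg ((r-1)*(x-y)), sq_nonneg ((r-1)*(x+y-8/3)),
        mul_nonneg (by linarith : (0:ℝ) ≤ r-3) (by linarith : (0:ℝ) ≤ 2*(r-1)+1)]
    have hprod : 0 < (x - y) * (-(r-1)^2*(x^2+x*y+y^2) + 4*(r-1)^2*(x+y) + (4-8*(r-1))*(r-1)) :=
      mul_pos_of_neg_of_neg (by linarith) hQ
    have hid : Naux r x - Naux r y =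
        (x - y) * (-(r-1)^2*(x^2+x*y+y^2) + 4*(r-1)^2*(x+y) + (4-8*(r-1))*(r-1)) := by
      unfold Naux; ring
    linarith
  -- values of the cubic at key points
  have hNc : 0 ≤ Naux r (2/(r-1)) := by
    have heq : Naux r (2/(r-1)) = 4*(r-3)*(r-2)^2/(r-1) := by
      unfold Naux; field_simp; ring
    rw [heq]
    apply div_nonneg _ hK0.le
    have : 0 ≤ (r-3)*(r-2)^2 := mul_nonneg (by linarith) (sq_nonneg _)
    linarith
  have hNb : Naux r (2/s) < 0 := by
    have heq : Naux r (2/s) = 4*((s-1)^2*(s^2-2*s-1)) := by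
      have hr1 : r - 1 = s^2 := hs2.symm
      unfold Naux
      rw [hr1]
      field_simp
      ring
    have hslt : s < 12/5 := by nlinarith
    have h1 : s^2 - 2*s - 1 < 0 := by nlinarith
    have h2 : 0 < (s-1)^2 := pow_pos (by linarith) 2
    have := mul_neg_of_pos_of_neg h2 h1
    rw [heq]; linarith
  have hNa : 0 < Naux r ((r-2)/(r-1)) := by
    have heq : Naux r ((r-2)/(r-1)) = (r-2)*(8-(r-4)^2)/(r-1) := by
      unfold Naux; field_simp; ring
    rw [heq]
    apply div_pos _ hK0
    have h1 : (0:ℝ) < r - 2 := by linarith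
    have h2 : (0:ℝ) < 8 - (r-4)^2 := by nlinarith
    exact mul_pos h1 h2
  -- IVT gives the crossing point
  have hcb : 2/(r-1) ≤ 2/s := by
    rw [div_le_div_iff₀ hK0 hs0]
    nlinarith
  obtain ⟨αs, hαs_mem, hroot⟩ :=
    intermediate_value_Icc' hcb ((Naux_continuous r).continuousOn)
      (Set.mem_Icc.2 ⟨hNb.le, hNc⟩)
  have ha0 : (0:ℝ) < (r-2)/(r-1) := div_pos (by linarith) hK0
  have hb2 : 2/s < 2 := by rw [div_lt_iff₀ hs0]; linarith
  have ha_lt : (r-2)/(r-1) < αs := by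
    by_contra h
    push_neg at h
    rcases h.lt_or_eq with h' | h'
    · have := hanti αs ((r-2)/(r-1)) h'
      rw [hroot] at this; linarith
    · rw [h'] at hroot; linarith
  have hb_gt : αs < 2/s := lt_of_le_of_ne hαs_mem.2 (by
    intro h; rw [h] at hroot; linarith)
  have hc_le : 2/(r-1) ≤ αs := hαs_mem.1
  -- denominator positivity
  have hbden : ∀ α : ℝ, α < 2/s → α * (r-1) < r := by
    intro α hα
    have h1 : α * (r-1) < (2/s) * (r-1) := mul_lt_mul_of_pos_right hα hK0
    have h2 : (2/s) * (r-1) = 2*s := by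
      rw [← hs2]; field_simp
    nlinarith [sq_nonneg (s-1)]
  -- the key difference identity
  have hdiff : ∀ α : ℝ, 0 < α → α * (r-1) < r →
      (4 - (r - 1) * α ^ 2) / (r - α * (r - 1)) - (4 - (4 * (r - 2)) / ((r - 1) * α)) =
        Naux r α / ((r-1) * α * (r - α * (r-1))) := by
    intro α hα0 hαd
    have hd1 : (r:ℝ) - 1 ≠ 0 := ne_of_gt hK0
    have hd2 : α ≠ 0 := ne_of_gt hα0
    have hd3 : r - α * (r-1) ≠ 0 := ne_of_gt (by linarith)
    unfold Naux
    rw [eq_div_iff (mul_ne_zero (mul_ne_zero hd1 hd2) hd3)]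
    have e1 : (4 - (r - 1) * α ^ 2) / (r - α * (r - 1)) * (r - α * (r - 1)) = 4 - (r - 1) * α ^ 2 :=
      div_mul_cancel₀ _ hd3
    have e2 : (4 * (r - 2)) / ((r - 1) * α) * ((r - 1) * α) = 4 * (r - 2) :=
      div_mul_cancel₀ _ (mul_ne_zero hd1 hd2)
    linear_combination ((r-1)*α) * e1 + (r - α * (r-1)) * e2
  -- branch identification on the left
  have bullet1 : ∀ α ∈ Set.Ioc ((r-2)/(r-1)) αs,
      mFun k α = 4 - (4 * (r - 2)) / ((r - 1) * α) := by
    rintro α ⟨h1, h2⟩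
    have hα0 : 0 < α := lt_trans ha0 h1
    have hαb : α < 2/s := lt_of_le_of_lt h2 hb_gt
    have hαd : α * (r-1) < r := hbden α hαb
    have hN : 0 ≤ Naux r α := by
      rcases h2.lt_or_eq with h' | h'
      · have := hanti α αs h'; rw [hroot] at this; linarith
      · rw [h', hroot]
    have hdpos : 0 < (r-1) * α * (r - α * (r-1)) := by
      apply mul_pos (mul_pos hK0 hα0) (by linarith)
    have hge : 4 - (4 * (r - 2)) / ((r - 1) * α) ≤
        (4 - (r - 1) * α ^ 2) / (r - α * (r - 1)) := by
      have h := hdiff α hα0 hαd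
      have : 0 ≤ Naux r α / ((r-1) * α * (r - α * (r-1))) := div_nonneg hN hdpos.le
      linarith
    rw [hmf α]
    exact min_eq_right hge
  -- branch identification on the right
  have bullet2 : ∀ α ∈ Set.Ico αs (2/s),
      mFun k α = (4 - (r - 1) * α ^ 2) / (r - α * (r - 1)) := by
    rintro α ⟨h1, h2⟩
    have hα0 : 0 < α := lt_of_lt_of_le (lt_trans ha0 ha_lt) h1
    have hαd : α * (r-1) < r := hbden α h2
    have hN : Naux r α ≤ 0 := by
      rcases h1.lt_or_eq with h' | h'
      · have := hanti αs α h'; rw [hroot] at this; linarith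
      · rw [← h', hroot]
    have hdpos : 0 < (r-1) * α * (r - α * (r-1)) := by
      apply mul_pos (mul_pos hK0 hα0) (by linarith)
    have hle : (4 - (r - 1) * α ^ 2) / (r - α * (r - 1)) ≤
        4 - (4 * (r - 2)) / ((r - 1) * α) := by
      have h := hdiff α hα0 hαd
      have : Naux r α / ((r-1) * α * (r - α * (r-1))) ≤ 0 :=
        div_nonpos_of_nonpos_of_nonneg hN hdpos.le
      linarith
    rw [hmf α]
    exact min_eq_left hle
  refine ⟨αs, ⟨ha_lt, hb_gt⟩, bullet1, bullet2, ?_, ?_⟩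
  · -- monotone on the left
    intro x hx y hy hxy
    rw [bullet1 x hx, bullet1 y hy]
    have hx0 : 0 < x := lt_trans ha0 hx.1
    have hy0 : 0 < y := lt_trans ha0 hy.1
    have hdx : 0 < (r-1)*x := mul_pos hK0 hx0
    have hdy : 0 < (r-1)*y := mul_pos hK0 hy0
    have : (4 * (r-2)) / ((r-1)*y) ≤ (4 * (r-2)) / ((r-1)*x) := by
      apply div_le_div_of_nonneg_left (by linarith) hdx
      nlinarith
    linarith
  · -- antitone on the right
    intro x hx y hy hxy
    rw [bullet2 x hx, bullet2 y hy]
    have hx0 : 0 < x := lt_of_lt_of_le (lt_trans ha0 ha_lt) hx.1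
    have hy0 : 0 < y := lt_of_lt_of_le (lt_trans ha0 ha_lt) hy.1
    have hdx : 0 < r - x*(r-1) := by linarith [hbden x hx.2]
    have hdy : 0 < r - y*(r-1) := by linarith [hbden y hy.2]
    have hKx : 2 ≤ (r-1)*x := by
      have h1 : 2/(r-1) ≤ x := le_trans hc_le hx.1
      have := mul_le_mul_of_nonneg_left h1 hK0.le
      rw [mul_div_cancel₀ _ (ne_of_gt hK0)] at this
      linarith
    have hy2 : y < 2 := lt_trans hy.2 hb2
    rw [div_le_div_iff₀ hdy hdx]
    nlinarith [mul_nonneg (mul_nonneg (mul_nonneg hK0.le (by linarith : (0:ℝ) ≤ y - x))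
        (by linarith : (0:ℝ) ≤ (r-1)*x - 2)) (by linarith : (0:ℝ) ≤ 2 - y),
      mul_nonneg (mul_nonneg hK0.le (by linarith : (0:ℝ) ≤ r - 2)) (sq_nonneg (x-y))]
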